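/- Let T ≥ 1 and d ≥ 1 be natural numbers, let U_1, …, U_T be unitary d×d complex matrices, and let Π_in and Π_out be orthogonal projections on ℂ^d (Hermitian idempotent matrices). On ℂ^{T+1} ⊗ ℂ^d define the Hermitian matrix H = Σ_{t=0}^{T−1} [ (|t⟩⟨t| + |t+1⟩⟨t+1|) ⊗ I − |t+1⟩⟨t| ⊗ U_{t+1} − |t⟩⟨t+1| ⊗ U_{t+1}^† ] + |0⟩⟨0| ⊗ Π_in + |T⟩⟨T| ⊗ Π_out, where {|t⟩}_{t=0}^{T} is the standard basis of ℂ^{T+1}. Suppose ψ ∈ ℂ^d is a unit vector with Π_in ψ = 0 and ⟨U_T ⋯ U_1 ψ, Π_out U_T ⋯ U_1 ψ⟩ ≤ η for some real η ≥ 0. Then the smallest eigenvalue of H is at most η/(T+1). -/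

import Mathlib

open Matrix
open scoped Kronecker

/-- Paper's Lemma 4 (ground-state energy upper bound for the Feynman–Kitaev
Hamiltonian): let `H` be the clock Hamiltonian of a `T`-step computation with
unitaries `U_1, …, U_T` (here `0`-indexed as `U 0, …, U (T-1)`), input penalty
`Πin` and output penalty `Πout`. If some unit vector `ψ` with `Πin ψ = 0` has
final output penalty `⟨ψ_T, Πout ψ_T⟩ ≤ η` where `ψ_T = U_T ⋯ U_1 ψ`, then the
smallest eigenvalue of `H` is at most `η / (T+1)`. -/
lemma rayleigh_min {n : Type*} [Fintype n] [DecidableEq n] [Nonempty n]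
    {A : Matrix n n ℂ} (hA : A.IsHermitian) (v : n → ℂ) :
    ∃ i, hA.eigenvalues i * (star v ⬝ᵥ v).re ≤ (star v ⬝ᵥ A *ᵥ v).re := by
  classical
  set B : Matrix n n ℂ := (hA.eigenvectorUnitary : Matrix n n ℂ) with hB
  set w : n → ℂ := (star B) *ᵥ v with hw
  have hBB : B * star B = 1 := (Matrix.mem_unitaryGroup_iff).mp hA.eigenvectorUnitary.2
  have hvv : star v ⬝ᵥ v = star w ⬝ᵥ w := by
    rw [hw, star_mulVec, star_eq_conjTranspose, conjTranspose_conjTranspose,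
      dotProduct_mulVec, vecMul_vecMul, ← star_eq_conjTranspose, hBB, vecMul_one]
  have hAv : star v ⬝ᵥ A *ᵥ v
      = star w ⬝ᵥ (diagonal (RCLike.ofReal ∘ hA.eigenvalues)) *ᵥ w := by
    conv_lhs => rw [hA.spectral_theorem]
    rw [hw, star_mulVec, star_eq_conjTranspose, conjTranspose_conjTranspose,
      dotProduct_mulVec, dotProduct_mulVec, dotProduct_mulVec,
      vecMul_vecMul, vecMul_vecMul, Unitary.conjStarAlgAut_apply, Matrix.mul_assoc]
    rfl
  have hterm : ∀ j, (star w j * ((diagonal (RCLike.ofReal ∘ hA.eigenvalues)) *ᵥ w) j).re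
      = hA.eigenvalues j * Complex.normSq (w j) := by
    intro j
    rw [mulVec_diagonal]
    simp [Complex.normSq_apply]
    ring
  have hre : (star v ⬝ᵥ A *ᵥ v).re = ∑ j, hA.eigenvalues j * Complex.normSq (w j) := by
    rw [hAv, dotProduct, Complex.re_sum]
    exact Finset.sum_congr rfl fun j _ => hterm j
  have hnn : (star v ⬝ᵥ v).re = ∑ j, Complex.normSq (w j) := by
    rw [hvv, dotProduct, Complex.re_sum]
    refine Finset.sum_congr rfl fun j _ => ?_
    simp [Complex.normSq_apply]
  obtain ⟨i, -, hi⟩ := Finset.exists_min_image Finset.univ hA.eigenvalues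
    ⟨Classical.arbitrary n, Finset.mem_univ _⟩
  refine ⟨i, ?_⟩
  rw [hre, hnn, Finset.mul_sum]
  exact Finset.sum_le_sum fun j _ =>
    mul_le_mul_of_nonneg_right (hi j (Finset.mem_univ j)) (Complex.normSq_nonneg _)

lemma dot_sum_mulVec {n ι : Type*} [Fintype n] (s : Finset ι)
    (M : ι → Matrix n n ℂ) (u v : n → ℂ) :
    u ⬝ᵥ (∑ t ∈ s, M t) *ᵥ v = ∑ t ∈ s, u ⬝ᵥ (M t) *ᵥ v := by
  classical
  induction s using Finset.induction with
  | empty => simp [Matrix.zero_mulVec]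
  | insert _ _ hx ih =>
    rw [Finset.sum_insert hx, Finset.sum_insert hx, add_mulVec, dotProduct_add, ih]

lemma dot_kron_std {m d : ℕ} (a b : Fin m) (N : Matrix (Fin d) (Fin d) ℂ) (f : Fin m → Fin d → ℂ) :
    star (fun p : Fin m × Fin d => f p.1 p.2) ⬝ᵥ
      ((Matrix.single a b (1:ℂ) ⊗ₖ N) *ᵥ fun p => f p.1 p.2)
    = star (f a) ⬝ᵥ (N *ᵥ f b) := by
  classical
  simp only [dotProduct, mulVec, Fintype.sum_prod_type, kroneckerMap_apply,
    Matrix.single, Matrix.of_apply, Pi.star_apply]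
  simp only [ite_mul, one_mul, zero_mul, Finset.sum_ite_eq, Finset.mem_univ, if_true]
  rw [Finset.sum_comm]
  simp only [ite_and, Finset.sum_ite_eq, Finset.mem_univ, if_true]
  simp [Finset.mul_sum, Finset.sum_ite_eq, mul_assoc]

theorem fk_ground_energy_upper_bound (T d : ℕ) (hT : 1 ≤ T) (hd : 1 ≤ d)
    (U : ℕ → Matrix (Fin d) (Fin d) ℂ)
    (hU : ∀ t < T, U t ∈ Matrix.unitaryGroup (Fin d) ℂ)
    (Pin Pout : Matrix (Fin d) (Fin d) ℂ)
    (hin1 : Pin.IsHermitian) (hin2 : Pin * Pin = Pin)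
    (hout1 : Pout.IsHermitian) (hout2 : Pout * Pout = Pout)
    (ψ : Fin d → ℂ) (hψ : star ψ ⬝ᵥ ψ = 1)
    (hker : Pin.mulVec ψ = 0)
    (η : ℝ) (hη : 0 ≤ η)
    (ψT : Fin d → ℂ)
    (hψT : ψT = (((List.range T).reverse.map U).prod).mulVec ψ)
    (hout : (star ψT ⬝ᵥ Pout.mulVec ψT).re ≤ η)
    (H : Matrix (Fin (T + 1) × Fin d) (Fin (T + 1) × Fin d) ℂ)
    (hH : H =
      (∑ t : Fin T,
        ((Matrix.single t.castSucc t.castSucc (1 : ℂ)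
            + Matrix.single t.succ t.succ (1 : ℂ)) ⊗ₖ (1 : Matrix (Fin d) (Fin d) ℂ)
          - Matrix.single t.succ t.castSucc (1 : ℂ) ⊗ₖ U t
          - Matrix.single t.castSucc t.succ (1 : ℂ) ⊗ₖ (U t)ᴴ))
        + Matrix.single (0 : Fin (T + 1)) (0 : Fin (T + 1)) (1 : ℂ) ⊗ₖ Pin
        + Matrix.single (Fin.last T) (Fin.last T) (1 : ℂ) ⊗ₖ Pout)
    (hHerm : H.IsHermitian) :
    ∃ i, hHerm.eigenvalues i ≤ η / (T + 1) := by

  classical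
  -- the computation history
  set g : ℕ → Fin d → ℂ := fun t => (((List.range t).reverse.map U).prod).mulVec ψ with hg
  have hg0 : g 0 = ψ := by simp [hg]
  have hgsucc : ∀ t, g (t + 1) = (U t) *ᵥ g t := by
    intro t
    simp [hg, List.range_succ, Matrix.mulVec_mulVec]
  have hgT : ψT = g T := by rw [hψT]
  -- unitaries preserve the norm
  have hnorm : ∀ t ≤ T, star (g t) ⬝ᵥ g t = 1 := by
    intro t ht
    induction t with
    | zero => simpa [hg0] using hψ
    | succ s ih =>
      have hUs : star (U s) * U s = 1 :=
        (Matrix.mem_unitaryGroup_iff').mp (hU s (lt_of_lt_of_le (Nat.lt_succ_self s) ht))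
      rw [hgsucc, star_mulVec, dotProduct_mulVec, vecMul_vecMul,
        ← star_eq_conjTranspose]
      rw [show star (g s) ᵥ* (star (U s) * U s) = star (g s) ᵥ* 1 by rw [hUs],
        vecMul_one]
      exact ih (le_of_lt (lt_of_lt_of_le (Nat.lt_succ_self s) ht))
  -- the history state
  set f : Fin (T + 1) → Fin d → ℂ := fun t => g t.val with hf
  set Φ : Fin (T + 1) × Fin d → ℂ := fun p => f p.1 p.2 with hΦ
  have hΦΦ : star Φ ⬝ᵥ Φ = (T + 1 : ℂ) := by
    rw [hΦ]
    simp only [dotProduct, Fintype.sum_prod_type, Pi.star_apply]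
    have : ∀ t : Fin (T + 1), ∑ i, star (f t) i * f t i = 1 := by
      intro t
      exact hnorm t.val (Nat.lt_succ_iff.mp t.isLt)
    calc (∑ t : Fin (T + 1), ∑ i, (starRingEnd ℂ) (f t i) * f t i)
        = ∑ t : Fin (T + 1), (1 : ℂ) := by
          refine Finset.sum_congr rfl fun t _ => this t
      _ = (T + 1 : ℂ) := by simp
  -- energy of the history state
  have henergy : star Φ ⬝ᵥ H *ᵥ Φ = star ψT ⬝ᵥ Pout.mulVec ψT := by
    rw [hH, hΦ]
    rw [add_mulVec, add_mulVec, dotProduct_add, dotProduct_add]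
    have hsum : star (fun p : Fin (T+1) × Fin d => f p.1 p.2) ⬝ᵥ
        ((∑ t : Fin T,
        ((Matrix.single t.castSucc t.castSucc (1 : ℂ)
            + Matrix.single t.succ t.succ (1 : ℂ)) ⊗ₖ (1 : Matrix (Fin d) (Fin d) ℂ)
          - Matrix.single t.succ t.castSucc (1 : ℂ) ⊗ₖ U t
          - Matrix.single t.castSucc t.succ (1 : ℂ) ⊗ₖ (U t)ᴴ)) *ᵥ
          fun p => f p.1 p.2) = 0 := by
      rw [dot_sum_mulVec]
      refine Finset.sum_eq_zero fun t _ => ?_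
      have htlt : t.val < T := t.isLt
      have hUt : star (U t.val) * U t.val = 1 :=
        (Matrix.mem_unitaryGroup_iff').mp (hU t.val htlt)
      have hfc : f t.castSucc = g t.val := by simp [hf]
      have hfs : f t.succ = (U t.val) *ᵥ g t.val := by
        simp only [hf, Fin.val_succ]
        exact hgsucc t.val
      have h1 : star (g t.val) ⬝ᵥ g t.val = 1 := hnorm t.val (le_of_lt htlt)
      rw [sub_mulVec, sub_mulVec, add_kronecker, add_mulVec,
        dotProduct_sub, dotProduct_sub, dotProduct_add,
        dot_kron_std, dot_kron_std, dot_kron_std, dot_kron_std]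
      rw [hfc, hfs]
      simp only [Matrix.one_mulVec]
      have h2 : star ((U t.val) *ᵥ g t.val) ⬝ᵥ ((U t.val) *ᵥ g t.val) = 1 := by
        rw [star_mulVec, dotProduct_mulVec, vecMul_vecMul, ← star_eq_conjTranspose]
        rw [show star (g t.val) ᵥ* (star (U t.val) * U t.val) = star (g t.val) ᵥ* 1 by
          rw [hUt], vecMul_one, h1]
      have h3 : star (g t.val) ⬝ᵥ ((U t.val)ᴴ *ᵥ ((U t.val) *ᵥ g t.val)) = 1 := by
        rw [Matrix.mulVec_mulVec, ← star_eq_conjTranspose, hUt, Matrix.one_mulVec, h1]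
      rw [h1, h2, h3]
      ring
    rw [hsum]
    have hinz : star (fun p : Fin (T+1) × Fin d => f p.1 p.2) ⬝ᵥ
        ((Matrix.single (0 : Fin (T + 1)) (0 : Fin (T + 1)) (1 : ℂ) ⊗ₖ Pin) *ᵥ
          fun p => f p.1 p.2) = 0 := by
      rw [dot_kron_std]
      have : f (0 : Fin (T + 1)) = ψ := by simp [hf, hg0]
      rw [this, hker]
      simp
    have houtv : star (fun p : Fin (T+1) × Fin d => f p.1 p.2) ⬝ᵥ
        ((Matrix.single (Fin.last T) (Fin.last T) (1 : ℂ) ⊗ₖ Pout) *ᵥ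
          fun p => f p.1 p.2) = star ψT ⬝ᵥ Pout.mulVec ψT := by
      rw [dot_kron_std]
      have : f (Fin.last T) = ψT := by rw [hgT]; simp [hf]
      rw [this]
    rw [hinz, houtv]
    ring
  haveI : Nonempty (Fin (T + 1) × Fin d) := ⟨(0, ⟨0, hd⟩)⟩
  obtain ⟨i, hi⟩ := rayleigh_min hHerm Φ
  refine ⟨i, ?_⟩
  rw [hΦΦ] at hi
  have hre : ((T : ℂ) + 1).re = (T : ℝ) + 1 := by simp
  rw [hre, henergy] at hi
  have hpos : (0 : ℝ) < (T : ℝ) + 1 := by positivity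
  exact (le_div_iff₀ hpos).mpr (hi.trans hout)
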